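/- arXiv:2206.06625 — 5 statements merged into one kernel-verified Lean document; each statement's English description precedes it below -/
import Mathlib

section
/- Let C : ℝ → Matrix (Fin 2) (Fin 2) ℂ depend smoothly on a parameter λ and satisfy ∂_z C(z,λ) = C(z,λ) · ζ(z,λ) with C(0,λ) = 1 for all λ. Then for all z and λ, (∂_λ C(z,λ)) · C(z,λ)⁻¹ = ∫_0^z C(t,λ) · (∂_λ ζ(t,λ)) · C(t,λ)⁻¹ dt. -/
open Matrix intervalIntegral Set Real

attribute [local instance] Matrix.normedAddCommGroup Matrix.normedSpace

local notation "Mat" => Matrix (Fin 2) (Fin 2) ℂ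

lemma mnorm_mul (A B : Mat) : ‖A * B‖ ≤ 2 * ‖A‖ * ‖B‖ := by
  rw [Matrix.norm_le_iff (by positivity)]
  intro i j
  calc ‖(A * B) i j‖ = ‖∑ k, A i k * B k j‖ := by rw [Matrix.mul_apply]
    _ ≤ ∑ k, ‖A i k * B k j‖ := norm_sum_le _ _
    _ ≤ ∑ _k : Fin 2, ‖A‖ * ‖B‖ := by
        refine Finset.sum_le_sum fun k _ => ?_
        rw [norm_mul]
        exact mul_le_mul (Matrix.norm_entry_le_entrywise_sup_norm A)
          (Matrix.norm_entry_le_entrywise_sup_norm B) (norm_nonneg _) (norm_nonneg _)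
    _ = 2 * ‖A‖ * ‖B‖ := by simp [Finset.sum_const]; ring

noncomputable def mulL : Mat →L[ℝ] Mat →L[ℝ] Mat :=
  LinearMap.mkContinuous₂
    (LinearMap.mk₂ ℝ (· * ·) add_mul (fun c m n => smul_mul_assoc c m n)
      mul_add (fun c m n => mul_smul_comm c m n)) 2 mnorm_mul

@[simp] lemma mulL_apply (A B : Mat) : mulL A B = A * B := rfl

lemma HasDerivAt.matmul {u v : ℝ → Mat} {u' v' : Mat} {t : ℝ}
    (hu : HasDerivAt u u' t) (hv : HasDerivAt v v' t) :
    HasDerivAt (fun s => u s * v s) (u' * v t + u t * v') t := by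
  have h1 := ContinuousLinearMap.hasDerivAt_of_bilinear (B := mulL) (fun _ => hu) (fun _ => hv)
  rw [add_comm]
  exact h1

lemma gronwallBound_scale (K e a t : ℝ) :
    gronwallBound 0 K (a * e) t = a * gronwallBound 0 K e t := by
  unfold gronwallBound; split_ifs <;> ring

lemma gronwallBound_one_nonneg {K t : ℝ} (hK : 0 ≤ K) (ht : 0 ≤ t) :
    0 ≤ gronwallBound 0 K 1 t := by
  unfold gronwallBound
  split_ifs with h
  · simpa using ht
  · have hK' : 0 < K := lt_of_le_of_ne hK (Ne.symm h)
    have h1 : (1:ℝ) ≤ Real.exp (K * t) := by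
      rw [← Real.exp_zero]; exact Real.exp_le_exp.2 (by positivity)
    simp only [zero_mul, zero_add]
    have := sub_nonneg.2 h1
    positivity

lemma gronwall_uIcc {E : Type*} [NormedAddCommGroup E] [NormedSpace ℝ E]
    {r r' : ℝ → E} {z K ε : ℝ}
    (hd : ∀ t, HasDerivAt r (r' t) t)
    (hb : ∀ t ∈ uIcc 0 z, ‖r' t‖ ≤ K * ‖r t‖ + ε)
    (h0 : r 0 = 0) : ‖r z‖ ≤ gronwallBound 0 K ε |z| := by
  rcases le_or_gt 0 z with hz | hz
  · have huIcc : uIcc (0:ℝ) z = Icc 0 z := uIcc_of_le hz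
    have := norm_le_gronwallBound_of_norm_deriv_right_le
      (f := r) (f' := r') (δ := 0) (K := K) (ε := ε) (a := 0) (b := z)
      (fun t _ => (hd t).continuousAt.continuousWithinAt)
      (fun t _ => (hd t).hasDerivWithinAt)
      (by simp [h0])
      (fun t ht => hb t (huIcc ▸ Ico_subset_Icc_self ht))
      z (by simp [hz])
    simpa [abs_of_nonneg hz] using this
  · have huIcc : uIcc (0:ℝ) z = Icc z 0 := uIcc_of_ge hz.le
    have hfd : ∀ s : ℝ, HasDerivAt (fun s => r (-s)) ((-1 : ℝ) • r' (-s)) s := fun s =>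
      (hd (-s)).scomp s (by simpa using hasDerivAt_neg s)
    have key := norm_le_gronwallBound_of_norm_deriv_right_le
      (f := fun s => r (-s)) (f' := fun s => (-1 : ℝ) • r' (-s)) (δ := 0) (K := K) (ε := ε)
      (a := 0) (b := -z)
      (fun s _ => (hfd s).continuousAt.continuousWithinAt)
      (fun s _ => (hfd s).hasDerivWithinAt)
      (by simp [h0])
      (fun s hs => by
        have hm : -s ∈ uIcc (0:ℝ) z := by
          rw [huIcc]; exact ⟨by linarith [hs.2], by linarith [hs.1]⟩
        simpa using hb (-s) hm)
      (-z) ⟨by linarith, le_refl _⟩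
    simpa [abs_of_neg hz] using key

set_option maxHeartbeats 2000000 in
lemma key_hasDerivAt
    (C ζ ζl : ℝ → ℝ → Mat)
    (hζcont : Continuous (fun zl : ℝ × ℝ => ζ zl.1 zl.2))
    (hCcont : Continuous (fun zl : ℝ × ℝ => C zl.1 zl.2))
    (hode : ∀ (l : ℝ) (z : ℝ), HasDerivAt (fun w => C w l) (C z l * ζ z l) z)
    (hinit : ∀ l : ℝ, C 0 l = 1)
    (hunit : ∀ (z l : ℝ), IsUnit (C z l))
    (hζl : ∀ (z l : ℝ), HasDerivAt (fun m => ζ z m) (ζl z l) l)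
    (hζlcont : Continuous (fun zl : ℝ × ℝ => ζl zl.1 zl.2))
    (z l : ℝ) :
    HasDerivAt (fun μ => C z μ)
      ((∫ t in (0:ℝ)..z, C t l * ζl t l * (C t l)⁻¹) * C z l) l := by
  -- continuity of slices
  have hA : Continuous (fun t => C t l) :=
    hCcont.comp (continuous_id.prodMk continuous_const)
  have hdet : ∀ t : ℝ, IsUnit (C t l).det := fun t =>
    (Matrix.isUnit_iff_isUnit_det _).mp (hunit t l)
  have hAinv : Continuous (fun t => (C t l)⁻¹) := by
    have : (fun t => (C t l)⁻¹) = fun t => ((C t l).det)⁻¹ • (C t l).adjugate := by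
      funext t
      rw [Matrix.inv_def, Ring.inverse_eq_inv]
    rw [this]
    exact ((hA.matrix_det).inv₀ (fun t => (hdet t).ne_zero)).smul (hA.matrix_adjugate)
  have hζlA : Continuous (fun t => ζl t l) :=
    hζlcont.comp (continuous_id.prodMk continuous_const)
  set g : ℝ → Mat := fun t => C t l * ζl t l * (C t l)⁻¹ with hgdef
  have hg : Continuous g := (hA.mul hζlA).mul hAinv
  set W : ℝ → Mat := fun t => (∫ s in (0:ℝ)..t, g s) * C t l with hWdef
  have : TopologicalSpace.PseudoMetrizableSpace Mat :=
    inferInstanceAs (TopologicalSpace.PseudoMetrizableSpace (Fin 2 → Fin 2 → ℂ))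
  have hI : ∀ t : ℝ, HasDerivAt (fun u => ∫ s in (0:ℝ)..u, g s) (g t) t := fun t =>
    intervalIntegral.integral_hasDerivAt_right (hg.intervalIntegrable _ _)
      (hg.stronglyMeasurableAtFilter _ _) hg.continuousAt
  have hW : ∀ t : ℝ, HasDerivAt W (W t * ζ t l + C t l * ζl t l) t := by
    intro t
    have h1 := (hI t).matmul (hode l t)
    have e1 : g t * C t l = C t l * ζl t l := by
      rw [hgdef]
      rw [mul_assoc, Matrix.nonsing_inv_mul _ (hdet t), mul_one]
    have e2 : (∫ s in (0:ℝ)..t, g s) * (C t l * ζ t l) = W t * ζ t l := by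
      rw [hWdef, mul_assoc]
    rw [e1, e2] at h1
    rw [add_comm] at h1
    exact h1
  have hWc : Continuous W := continuous_iff_continuousAt.2 fun t => (hW t).continuousAt
  -- compact sets and bounds
  set s0 : Set ℝ := uIcc (0:ℝ) z with hs0def
  set J : Set ℝ := Icc (l - 1) (l + 1) with hJdef
  set Kc : Set (ℝ × ℝ) := s0 ×ˢ J with hKcdef
  have hKc : IsCompact Kc := isCompact_uIcc.prod isCompact_Icc
  obtain ⟨M0, hM0⟩ := hKc.exists_bound_of_continuousOn hζcont.continuousOn
  obtain ⟨MA0, hMA0⟩ := isCompact_uIcc.exists_bound_of_continuousOn hA.continuousOn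
  obtain ⟨ML0, hML0⟩ := hKc.exists_bound_of_continuousOn hζlcont.continuousOn
  obtain ⟨KW0, hKW0⟩ := isCompact_uIcc.exists_bound_of_continuousOn hWc.continuousOn
  set M : ℝ := max M0 0 with hMdef
  set MA : ℝ := max MA0 0 with hMAdef
  set ML : ℝ := max ML0 0 with hMLdef
  set KW : ℝ := max KW0 0 with hKWdef
  have hM : ∀ t ∈ s0, ∀ μ ∈ J, ‖ζ t μ‖ ≤ M := fun t ht μ hμ =>
    le_trans (hM0 (t, μ) ⟨ht, hμ⟩) (le_max_left _ _)
  have hMA : ∀ t ∈ s0, ‖C t l‖ ≤ MA := fun t ht => le_trans (hMA0 t ht) (le_max_left _ _)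
  have hML : ∀ t ∈ s0, ∀ μ ∈ J, ‖ζl t μ‖ ≤ ML := fun t ht μ hμ =>
    le_trans (hML0 (t, μ) ⟨ht, hμ⟩) (le_max_left _ _)
  have hKW : ∀ t ∈ s0, ‖W t‖ ≤ KW := fun t ht => le_trans (hKW0 t ht) (le_max_left _ _)
  have hMnn : 0 ≤ M := le_max_right _ _
  have hMAnn : 0 ≤ MA := le_max_right _ _
  have hMLnn : 0 ≤ ML := le_max_right _ _
  have hKWnn : 0 ≤ KW := le_max_right _ _
  set B : ℝ := gronwallBound 0 (2 * M) 1 |z| with hBdef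
  have hBnn : 0 ≤ B := gronwallBound_one_nonneg (by linarith) (abs_nonneg _)
  set c0 : ℝ := 2 * MA + 2 * KW * ML with hc0def
  have hc0nn : 0 ≤ c0 := by positivity
  -- the little-o estimate
  refine hasDerivAt_iff_isLittleO.2 ?_
  rw [Asymptotics.isLittleO_iff]
  intro c hc
  set ε : ℝ := c / (c0 * B + 1) with hεdef
  have hεpos : 0 < ε := div_pos hc (by positivity)
  have hUC := (hKc.uniformContinuousOn_of_continuous hζlcont.continuousOn)
  replace hUC := Metric.uniformContinuousOn_iff.1 hUC
  obtain ⟨δu, hδupos, hδu⟩ := hUC ε hεpos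
  set δ : ℝ := min δu (min ε 1) with hδdef
  have hδpos : 0 < δ := lt_min hδupos (lt_min hεpos one_pos)
  filter_upwards [Metric.ball_mem_nhds l hδpos] with μ hμ
  rw [Metric.mem_ball, Real.dist_eq] at hμ
  set Δ : ℝ := μ - l with hΔdef
  have hΔδu : |Δ| < δu := lt_of_lt_of_le hμ (min_le_left _ _)
  have hΔε : |Δ| ≤ ε := le_of_lt (lt_of_lt_of_le hμ (le_trans (min_le_right _ _) (min_le_left _ _)))
  have hΔ1 : |Δ| ≤ 1 := le_of_lt (lt_of_lt_of_le hμ (le_trans (min_le_right _ _) (min_le_right _ _)))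
  have hμJ : ∀ s ∈ uIcc l μ, s ∈ J := by
    intro s hs
    have h1 : |s - l| ≤ |μ - l| := abs_sub_left_of_mem_uIcc hs
    have := abs_le.1 (le_trans h1 hΔ1)
    exact ⟨by linarith [this.1], by linarith [this.2]⟩
  -- the remainder function
  set r : ℝ → Mat := fun t => C t μ - C t l - Δ • W t with hrdef
  set r' : ℝ → Mat := fun t =>
    C t μ * ζ t μ - C t l * ζ t l - Δ • (W t * ζ t l + C t l * ζl t l) with hr'def
  have hrd : ∀ t : ℝ, HasDerivAt r (r' t) t := fun t =>
    ((hode μ t).sub (hode l t)).sub ((hW t).const_smul Δ)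
  have hr0 : r 0 = 0 := by
    simp [hrdef, hWdef, hinit, intervalIntegral.integral_same]
  -- pointwise bound on the derivative on s0
  have hbound : ∀ t ∈ s0, ‖r' t‖ ≤ 2 * M * ‖r t‖ + |Δ| * ε * c0 := by
    intro t ht
    have hζint :=
      fun a b : ℝ => ((hζlcont.comp ((continuous_const : Continuous fun _ : ℝ => t).prodMk continuous_id)).intervalIntegrable (μ := MeasureTheory.volume) a b)
    simp only [Function.comp_def, id] at hζint
    have hζsub : (∫ s in l..μ, ζl t s) = ζ t μ - ζ t l :=
      intervalIntegral.integral_eq_sub_of_hasDerivAt (fun s _ => hζl t s) (hζint l μ)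
    have h2 : ζ t μ - ζ t l - Δ • ζl t l = ∫ s in l..μ, (ζl t s - ζl t l) := by
      rw [intervalIntegral.integral_sub (hζint l μ) (intervalIntegrable_const),
        intervalIntegral.integral_const, hζsub]
    have hμJ' : μ ∈ J := hμJ μ right_mem_uIcc
    have hb2 : ‖ζ t μ - ζ t l - Δ • ζl t l‖ ≤ ε * |Δ| := by
      rw [h2]
      exact intervalIntegral.norm_integral_le_of_norm_le_const (fun s hs => by
        have hs' : s ∈ uIcc l μ := Ioc_subset_Icc_self hs
        have hd2 : dist ((t, s) : ℝ × ℝ) (t, l) < δu := by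
          rw [Prod.dist_eq]
          simp only [dist_self, Real.dist_eq]
          have h1 : |s - l| ≤ |μ - l| := abs_sub_left_of_mem_uIcc hs'
          have h2 : max (0:ℝ) |s - l| = |s - l| := max_eq_right (abs_nonneg _)
          rw [h2]
          exact lt_of_le_of_lt h1 hΔδu
        have hlJ : l ∈ J := ⟨by linarith, by linarith⟩
        exact le_of_lt (by
          have := hδu (t, s) ⟨ht, hμJ s hs'⟩ (t, l) ⟨ht, hlJ⟩ hd2
          rwa [dist_eq_norm] at this))
    have hb3 : ‖ζ t μ - ζ t l‖ ≤ ML * |Δ| := by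
      rw [← hζsub]
      exact intervalIntegral.norm_integral_le_of_norm_le_const (fun s hs =>
        hML t ht s (hμJ s (Ioc_subset_Icc_self hs)))
    have hrw : r' t = r t * ζ t μ +
        (C t l * (ζ t μ - ζ t l - Δ • ζl t l) + Δ • (W t * (ζ t μ - ζ t l))) := by
      simp only [hr'def, hrdef, sub_mul, mul_sub, smul_mul_assoc, mul_smul_comm, smul_sub,
        smul_add]
      abel
    rw [hrw]
    have n1 : ‖r t * ζ t μ‖ ≤ 2 * M * ‖r t‖ := by
      calc ‖r t * ζ t μ‖ ≤ 2 * ‖r t‖ * ‖ζ t μ‖ := mnorm_mul _ _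
        _ ≤ 2 * ‖r t‖ * M := by
            have := hM t ht μ hμJ'
            nlinarith [norm_nonneg (r t)]
        _ = 2 * M * ‖r t‖ := by ring
    have n2 : ‖C t l * (ζ t μ - ζ t l - Δ • ζl t l)‖ ≤ 2 * MA * (ε * |Δ|) := by
      calc ‖C t l * (ζ t μ - ζ t l - Δ • ζl t l)‖
          ≤ 2 * ‖C t l‖ * ‖ζ t μ - ζ t l - Δ • ζl t l‖ := mnorm_mul _ _
        _ ≤ 2 * MA * (ε * |Δ|) := by
            have := hMA t ht
            nlinarith [norm_nonneg (C t l), norm_nonneg (ζ t μ - ζ t l - Δ • ζl t l),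
              mul_nonneg (le_of_lt hεpos) (abs_nonneg Δ)]
    have n3 : ‖Δ • (W t * (ζ t μ - ζ t l))‖ ≤ |Δ| * (2 * KW * (ML * |Δ|)) := by
      rw [norm_smul, Real.norm_eq_abs]
      have h4 : ‖W t * (ζ t μ - ζ t l)‖ ≤ 2 * KW * (ML * |Δ|) := by
        calc ‖W t * (ζ t μ - ζ t l)‖ ≤ 2 * ‖W t‖ * ‖ζ t μ - ζ t l‖ := mnorm_mul _ _
          _ ≤ 2 * KW * (ML * |Δ|) := by
              have := hKW t ht
              nlinarith [norm_nonneg (W t), norm_nonneg (ζ t μ - ζ t l),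
                mul_nonneg hMLnn (abs_nonneg Δ)]
      exact mul_le_mul_of_nonneg_left h4 (abs_nonneg Δ)
    calc ‖r t * ζ t μ + (C t l * (ζ t μ - ζ t l - Δ • ζl t l) + Δ • (W t * (ζ t μ - ζ t l)))‖
        ≤ ‖r t * ζ t μ‖ + (‖C t l * (ζ t μ - ζ t l - Δ • ζl t l)‖ +
            ‖Δ • (W t * (ζ t μ - ζ t l))‖) := by
          exact le_trans (norm_add_le _ _) (by gcongr; exact norm_add_le _ _)
      _ ≤ 2 * M * ‖r t‖ + (2 * MA * (ε * |Δ|) + |Δ| * (2 * KW * (ML * |Δ|))) := by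
          gcongr
      _ ≤ 2 * M * ‖r t‖ + |Δ| * ε * c0 := by
          rw [hc0def]
          nlinarith [abs_nonneg Δ, mul_nonneg (mul_nonneg hKWnn hMLnn) (abs_nonneg Δ),
            le_of_lt hεpos]
  -- Grönwall
  have hgron := gronwall_uIcc hrd hbound hr0
  have hfin : ‖r z‖ ≤ c * |Δ| := by
    have h5 : gronwallBound 0 (2 * M) (|Δ| * ε * c0) |z| = (|Δ| * ε * c0) * B := by
      have := gronwallBound_scale (2 * M) 1 (|Δ| * ε * c0) |z|
      rw [mul_one] at this
      rw [this, hBdef]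
    rw [h5] at hgron
    have h6 : ε * (c0 * B) ≤ c := by
      rw [hεdef]
      rw [div_mul_eq_mul_div, div_le_iff₀ (by positivity)]
      nlinarith [mul_nonneg hc0nn hBnn]
    calc ‖r z‖ ≤ |Δ| * ε * c0 * B := hgron
      _ = |Δ| * (ε * (c0 * B)) := by ring
      _ ≤ |Δ| * c := mul_le_mul_of_nonneg_left h6 (abs_nonneg _)
      _ = c * |Δ| := mul_comm _ _
  simpa [hrdef, Real.norm_eq_abs] using hfin

theorem lambda_derivative_formula
    (C Cl ζ ζl : ℝ → ℝ → Matrix (Fin 2) (Fin 2) ℂ)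
    (hζcont : Continuous (fun zl : ℝ × ℝ => ζ zl.1 zl.2))
    (hCcont : Continuous (fun zl : ℝ × ℝ => C zl.1 zl.2))
    (hode : ∀ (l : ℝ) (z : ℝ), HasDerivAt (fun w => C w l) (C z l * ζ z l) z)
    (hinit : ∀ l : ℝ, C 0 l = 1)
    (hunit : ∀ (z l : ℝ), IsUnit (C z l))
    (hCl : ∀ (z l : ℝ), HasDerivAt (fun m => C z m) (Cl z l) l)
    (hζl : ∀ (z l : ℝ), HasDerivAt (fun m => ζ z m) (ζl z l) l)
    (hζlcont : Continuous (fun zl : ℝ × ℝ => ζl zl.1 zl.2)) :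
    ∀ (z l : ℝ),
      Cl z l * (C z l)⁻¹ =
        ∫ t in (0:ℝ)..z, C t l * ζl t l * (C t l)⁻¹ := by
  intro z l
  have hkey := key_hasDerivAt C ζ ζl hζcont hCcont hode hinit hunit hζl hζlcont z l
  have heq : Cl z l = (∫ t in (0:ℝ)..z, C t l * ζl t l * (C t l)⁻¹) * C z l :=
    (hCl z l).unique hkey
  rw [heq, mul_assoc, Matrix.mul_nonsing_inv _ ((Matrix.isUnit_iff_isUnit_det _).mp (hunit z l)),
    mul_one]
end

section
/- Let a₀, b₀ : ℝ → ℂ be differentiable functions satisfying a₀(t)·conj(a₀(t)) − b₀(t)·conj(b₀(t)) = 1 for all t, and set κ(t) = conj(a₀(t))·b₀'(t) − b₀(t)·(conj(a₀))'(t) and m(t) = a₀(t)·b₀(t). Suppose m is periodic of period p. Then ∫_0^p Im( a₀(t)·conj(b₀(t))·κ(t) ) dt = ∫_0^p Im( conj(m(t))·m'(t) ) dt, i.e. it equals twice the signed area enclosed by the closed curve m. -/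
open Complex intervalIntegral

lemma kappa_key (A B A' B' : ℂ)
    (h : A * (starRingEnd ℂ) A - B * (starRingEnd ℂ) B = 1) :
    (A * (starRingEnd ℂ) B * ((starRingEnd ℂ) A * B' - B * (starRingEnd ℂ) A')).im
      = ((starRingEnd ℂ) (A * B) * (A' * B + A * B')).im := by
  have h1 := congrArg Complex.re h
  simp [Complex.mul_re, Complex.mul_im, Complex.sub_re] at h1
  simp [Complex.mul_re, Complex.mul_im]
  nlinarith [h1, sq_nonneg (A.re), sq_nonneg (A.im)]

theorem kappa_integral_equals_area_of_m
    (a₀ b₀ κ m : ℝ → ℂ) (p : ℝ) (hp : 0 < p)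
    (ha : Differentiable ℝ a₀) (hb : Differentiable ℝ b₀)
    (hrel : ∀ t, a₀ t * (starRingEnd ℂ) (a₀ t) - b₀ t * (starRingEnd ℂ) (b₀ t) = 1)
    (hκ : ∀ t, κ t = (starRingEnd ℂ) (a₀ t) * deriv b₀ t
        - b₀ t * deriv (fun s => (starRingEnd ℂ) (a₀ s)) t)
    (hm : ∀ t, m t = a₀ t * b₀ t)
    (hmper : Function.Periodic m p) :
    (∫ t in (0:ℝ)..p, (a₀ t * (starRingEnd ℂ) (b₀ t) * κ t).im) =
      ∫ t in (0:ℝ)..p, ((starRingEnd ℂ) (m t) * deriv m t).im := by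
  have hmfun : m = fun t => a₀ t * b₀ t := funext hm
  apply intervalIntegral.integral_congr
  intro t _
  have hda := (ha t).hasDerivAt
  have hdb := (hb t).hasDerivAt
  have hdconj : HasDerivAt (fun s => (starRingEnd ℂ) (a₀ s))
      ((starRingEnd ℂ) (deriv a₀ t)) t := hda.star
  have hdm : HasDerivAt m (deriv a₀ t * b₀ t + a₀ t * deriv b₀ t) t := by
    rw [hmfun]; exact hda.mul hdb
  dsimp only
  rw [hκ t, hdconj.deriv, hdm.deriv, hm t]
  exact kappa_key (a₀ t) (b₀ t) (deriv a₀ t) (deriv b₀ t) (hrel t)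
end

section
/- Define h(z) = (1 + i·sin z)/(i + sin z)² and ℓ(t) = ∫_0^t 2·h(s) ds for real t. Then ℓ(t) = −2·cos(t)/(i + sin t) + 2·cos(0)/(i + sin 0) (i.e. ℓ(t) = −2cos t/(i+sin t) − 2i), ℓ is periodic of period 2π, and ∫_0^{2π} Im( conj(ℓ(t)) · ℓ'(t) ) dt = 0. -/
open Complex Real intervalIntegral

private lemma zne (t : ℝ) : Complex.I + Complex.sin t ≠ 0 := by
  intro h
  have h2 : (Complex.I + Complex.sin (t:ℂ)).im = 0 := by rw [h]; rfl
  rw [← Complex.ofReal_sin] at h2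
  simp at h2

private lemma one_add_sq (s : ℝ) : ((1:ℝ) + s^2) ≠ 0 := by positivity

private lemma Fderiv (t : ℝ) :
    HasDerivAt (fun t : ℝ => -2 * Complex.cos t / (Complex.I + Complex.sin t) - 2 * Complex.I)
      (2 * ((1 + Complex.I * Complex.sin t) / (Complex.I + Complex.sin t) ^ 2)) t := by
  have hz : Complex.I + Complex.sin (t:ℂ) ≠ 0 := zne t
  have h1 : HasDerivAt (fun z : ℂ => -2 * Complex.cos z / (Complex.I + Complex.sin z) - 2 * Complex.I)
      (2 * ((1 + Complex.I * Complex.sin t) / (Complex.I + Complex.sin t) ^ 2)) (t:ℂ) := by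
    have hu : HasDerivAt (fun z : ℂ => -2 * Complex.cos z) (2 * Complex.sin t) (t:ℂ) := by
      simpa using ((Complex.hasDerivAt_cos (t:ℂ)).const_mul (-2))
    have hv : HasDerivAt (fun z : ℂ => Complex.I + Complex.sin z) (Complex.cos t) (t:ℂ) := by
      simpa using ((Complex.hasDerivAt_sin (t:ℂ)).const_add Complex.I)
    have := (hu.div hv hz).sub_const (2 * Complex.I)
    refine this.congr_deriv (Eq.symm ?_)
    rw [mul_div_assoc', div_eq_div_iff (pow_ne_zero 2 hz) (pow_ne_zero 2 hz)]
    linear_combination (-2 * (Complex.I + Complex.sin (t:ℂ))^2) * Complex.sin_sq_add_cos_sq (t:ℂ)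
  exact h1.comp_ofReal

private lemma hl' (t : ℝ) :
    -2 * Complex.cos t / (Complex.I + Complex.sin t) - 2 * Complex.I
      = (((-2*Real.cos t*Real.sin t : ℝ) : ℂ) + ((2*Real.cos t - 2*(1+Real.sin t^2) : ℝ) : ℂ) * Complex.I)
        / ((1+Real.sin t^2 : ℝ) : ℂ) := by
  have h1 : ((1+Real.sin t^2 : ℝ) : ℂ) ≠ 0 := by exact_mod_cast one_add_sq (Real.sin t)
  have h2 : (1:ℂ) + Complex.sin (t:ℂ)^2 ≠ 0 := by
    rw [← Complex.ofReal_sin]; exact_mod_cast one_add_sq (Real.sin t)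
  push_cast
  field_simp [zne t]
  linear_combination (-Complex.cos (t:ℂ)) * Complex.I_sq

private lemma hh' (t : ℝ) :
    2 * ((1 + Complex.I * Complex.sin t) / (Complex.I + Complex.sin t) ^ 2)
      = (((2*(3*Real.sin t^2-1) : ℝ) : ℂ) + ((2*(Real.sin t^3-3*Real.sin t) : ℝ) : ℂ) * Complex.I)
        / (((1+Real.sin t^2)^2 : ℝ) : ℂ) := by
  have h1 : (((1+Real.sin t^2)^2 : ℝ) : ℂ) ≠ 0 := by
    exact_mod_cast pow_ne_zero 2 (one_add_sq (Real.sin t))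
  rw [eq_div_iff h1, mul_div_assoc', div_mul_eq_mul_div, div_eq_iff (pow_ne_zero 2 (zne t))]
  push_cast
  linear_combination (6*Complex.I*Complex.sin (t:ℂ) - 2*Complex.I*Complex.sin (t:ℂ)^3 + 2
    + 6*Complex.sin (t:ℂ)^2 - 4*Complex.sin (t:ℂ)^4) * Complex.I_sq

private lemma imcalc (a b p q d1 d2 : ℝ) :
    ((starRingEnd ℂ) ((↑a + ↑b*Complex.I)/↑d1) * ((↑p + ↑q*Complex.I)/↑d2)).im
      = (a*q - b*p)/(d1*d2) := by
  have : (starRingEnd ℂ) ((↑a + ↑b*Complex.I)/↑d1) * ((↑p + ↑q*Complex.I)/↑d2)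
      = (↑((a*p+b*q)/(d1*d2)) + ↑((a*q-b*p)/(d1*d2))*Complex.I) := by
    push_cast
    simp only [map_div₀, map_add, map_mul, Complex.conj_ofReal, Complex.conj_I]
    field_simp
    ring_nf
    linear_combination (-(↑q * (↑d1:ℂ)⁻¹ * (↑d2:ℂ)⁻¹ * ↑b)) * Complex.I_sq
  rw [this]
  simp only [Complex.add_im, Complex.ofReal_im, Complex.mul_im, Complex.ofReal_re,
    Complex.I_im, Complex.I_re]
  ring

private lemma scalareq (s c : ℝ) (h : s^2 + c^2 = 1) :
    ((4*c - (4*c*c + 4*s*(-s))) * (1+s^2) - (4*s-4*s*c)*(2*s*c)) / (1+s^2)^2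
      = (-2*c*s * (2*(s^3-3*s)) - (2*c - 2*(1+s^2)) * (2*(3*s^2-1))) / ((1+s^2) * (1+s^2)^2) := by
  have hd : (1+s^2) ≠ 0 := by positivity
  field_simp
  linear_combination (4*s^4-4) * h

private noncomputable def Afun (t : ℝ) : ℝ :=
  (4*Real.sin t - 4*Real.sin t*Real.cos t)/(1+Real.sin t^2)

private lemma Aderiv (t : ℝ) :
    HasDerivAt Afun
      ((-2*Real.cos t*Real.sin t * (2*(Real.sin t^3-3*Real.sin t))
        - (2*Real.cos t - 2*(1+Real.sin t^2)) * (2*(3*Real.sin t^2-1)))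
        / ((1+Real.sin t^2) * (1+Real.sin t^2)^2)) t := by
  have hs := Real.hasDerivAt_sin t
  have hc := Real.hasDerivAt_cos t
  have hd : (1 + Real.sin t^2) ≠ 0 := by positivity
  have hn : HasDerivAt (fun t => 4*Real.sin t - 4*Real.sin t*Real.cos t)
      (4*Real.cos t - (4*Real.cos t*Real.cos t + 4*Real.sin t*(-Real.sin t))) t := by
    exact ((hs.const_mul 4).sub (((hs.const_mul 4)).mul hc))
  have hD : HasDerivAt (fun t => 1 + Real.sin t^2) (2*Real.sin t*Real.cos t) t := by
    have := (hs.pow 2).const_add 1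
    simpa [mul_comm, mul_assoc, mul_left_comm] using this
  have := hn.div hD hd
  refine this.congr_deriv (Eq.symm ?_)
  rw [scalareq _ _ (Real.sin_sq_add_cos_sq t)]

theorem lemniscate_example
    (h : ℝ → ℂ) (hh : ∀ t : ℝ, h t = (1 + Complex.I * Complex.sin t) / (Complex.I + Complex.sin t) ^ 2)
    (ℓ : ℝ → ℂ) (hℓ : ∀ t : ℝ, ℓ t = ∫ s in (0:ℝ)..t, 2 * h s) :
    (∀ t : ℝ, ℓ t = -2 * Complex.cos t / (Complex.I + Complex.sin t) - 2 * Complex.I) ∧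
    Function.Periodic ℓ (2 * π) ∧
    (∫ t in (0:ℝ)..2 * π, ((starRingEnd ℂ) (ℓ t) * deriv ℓ t).im) = 0 := by
  have hF : ∀ t : ℝ, HasDerivAt
      (fun t : ℝ => -2 * Complex.cos t / (Complex.I + Complex.sin t) - 2 * Complex.I)
      (2 * h t) t := by
    intro t; rw [hh]; exact Fderiv t
  have hcont2h : Continuous fun t : ℝ => 2 * h t := by
    have : (fun t : ℝ => 2 * h t)
        = fun t : ℝ => 2 * ((1 + Complex.I * Complex.sin t) / (Complex.I + Complex.sin t) ^ 2) := by
      funext t; rw [hh]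
    rw [this]
    apply Continuous.mul continuous_const
    apply Continuous.div
    · exact continuous_const.add (continuous_const.mul (Complex.continuous_sin.comp Complex.continuous_ofReal))
    · exact ((continuous_const.add (Complex.continuous_sin.comp Complex.continuous_ofReal)).pow 2)
    · exact fun t => pow_ne_zero 2 (zne t)
  have hF0 : -2 * Complex.cos (0:ℝ) / (Complex.I + Complex.sin (0:ℝ)) - 2 * Complex.I = 0 := by
    have h0 : ((0:ℝ):ℂ) = 0 := by norm_num
    rw [h0, Complex.sin_zero, Complex.cos_zero, add_zero]
    rw [sub_eq_zero, div_eq_iff Complex.I_ne_zero]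
    linear_combination (-2) * Complex.I_sq
  have part1 : ∀ t : ℝ, ℓ t = -2 * Complex.cos t / (Complex.I + Complex.sin t) - 2 * Complex.I := by
    intro t
    rw [hℓ]
    rw [intervalIntegral.integral_eq_sub_of_hasDerivAt (fun s _ => hF s)
      (hcont2h.intervalIntegrable 0 t), hF0, sub_zero]
  refine ⟨part1, ?_, ?_⟩
  · intro t
    rw [part1, part1]
    push_cast
    rw [Complex.sin_add_two_pi, Complex.cos_add_two_pi]
  · have hℓeq : ℓ = fun t : ℝ => -2 * Complex.cos t / (Complex.I + Complex.sin t) - 2 * Complex.I :=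
      funext part1
    have hld : ∀ t : ℝ, HasDerivAt ℓ (2 * h t) t := by
      intro t; rw [hℓeq]; exact hF t
    have hderiv : ∀ t : ℝ, deriv ℓ t = 2 * h t := fun t => (hld t).deriv
    have key : ∀ t : ℝ, HasDerivAt Afun (((starRingEnd ℂ) (ℓ t) * deriv ℓ t).im) t := by
      intro t
      have hval : ((starRingEnd ℂ) (ℓ t) * deriv ℓ t).im
          = (-2*Real.cos t*Real.sin t * (2*(Real.sin t^3-3*Real.sin t))
            - (2*Real.cos t - 2*(1+Real.sin t^2)) * (2*(3*Real.sin t^2-1)))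
            / ((1+Real.sin t^2) * (1+Real.sin t^2)^2) := by
        rw [hderiv, part1, hh, hl' t, hh' t, imcalc]
      rw [hval]
      exact Aderiv t
    have hcontg : Continuous fun t : ℝ => ((starRingEnd ℂ) (ℓ t) * deriv ℓ t).im := by
      have hint : (fun t : ℝ => ((starRingEnd ℂ) (ℓ t) * deriv ℓ t).im)
          = fun t : ℝ => ((starRingEnd ℂ) (ℓ t) * (2 * h t)).im := by
        funext t; rw [hderiv]
      rw [hint]
      apply Complex.continuous_im.comp
      apply Continuous.mul _ hcont2h
      apply Complex.continuous_conj.comp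
      rw [hℓeq]
      apply Continuous.sub _ continuous_const
      apply Continuous.div
      · exact continuous_const.mul (Complex.continuous_cos.comp Complex.continuous_ofReal)
      · exact continuous_const.add (Complex.continuous_sin.comp Complex.continuous_ofReal)
      · exact zne
    rw [intervalIntegral.integral_eq_sub_of_hasDerivAt (fun t _ => key t)
      (hcontg.intervalIntegrable 0 (2*π))]
    simp [Afun, Real.sin_two_pi]
end

section
/- Define h(t) = exp(−iπ/4) + √6·cos(4t) and α(t) = 2·e^{2it}·h(t). Then ∫_0^π α(t) dt = 0, and the antiderivative ℓ(t) = ∫_0^t α(s) ds is a closed curve of period π satisfying ∫_0^π Im( conj(ℓ(t)) ℓ'(t) ) dt = 0. -/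
open Complex Real intervalIntegral

noncomputable section CEqOneAux

private def cst : ℂ := Complex.exp (-Complex.I * (Real.pi : ℂ) / 4)
private def dd : ℂ := Complex.exp (Complex.I * (Real.pi : ℂ) / 4)
private def sq6 : ℂ := ((Real.sqrt 6 : ℝ) : ℂ)
private def KK : ℂ := 2*Complex.I*(cst*dd) + Complex.I*sq6^2/6 - Complex.I*sq6^2/2

private def Fc : ℝ → ℂ := fun t =>
  (-Complex.I*cst) * Complex.exp (2*Complex.I*t)
  + (-Complex.I*sq6/6) * Complex.exp (6*Complex.I*t)
  + (Complex.I*sq6/2) * Complex.exp ((-2)*Complex.I*t)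

private def Gc : ℝ → ℂ := fun t =>
  (sq6*(dd-cst)/4) * Complex.exp (4*Complex.I*t)
  - (sq6*(dd+cst/3)/4) * Complex.exp ((-4)*Complex.I*t)
  - (sq6^2/16) * Complex.exp (8*Complex.I*t)
  - (sq6^2/48) * Complex.exp ((-8)*Complex.I*t)
  + KK * t

private lemma hasDerivAt_expat (a : ℂ) (t : ℝ) :
    HasDerivAt (fun s : ℝ => Complex.exp (a * s)) (a * Complex.exp (a * t)) t := by
  have h1 : HasDerivAt (fun s : ℝ => a * (s : ℂ)) a t := by
    simpa using (Complex.ofRealCLM.hasDerivAt (x := t)).const_mul a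
  simpa [mul_comm] using h1.cexp

private lemma hdc : (starRingEnd ℂ) cst = dd := by
  unfold cst dd
  rw [← Complex.exp_conj]
  congr 1
  simp [map_div₀, map_ofNat]

private lemma hcd : cst * dd = 1 := by
  unfold cst dd
  rw [← Complex.exp_add]
  rw [show -Complex.I * (Real.pi:ℂ)/4 + Complex.I * (Real.pi:ℂ)/4 = 0 by ring]
  exact Complex.exp_zero

private lemma hs6 : sq6 ^ 2 = 6 := by
  unfold sq6
  norm_cast
  rw [Real.sq_sqrt] <;> norm_num

private lemma hKK : KK = 0 := by
  unfold KK
  rw [hcd, hs6]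
  ring

private lemma cexp_conj (a : ℂ) (t : ℝ) :
    (starRingEnd ℂ) (Complex.exp (a * t)) = Complex.exp ((starRingEnd ℂ) a * t) := by
  rw [← Complex.exp_conj, map_mul, Complex.conj_ofReal]

private lemma conj_sq6 : (starRingEnd ℂ) sq6 = sq6 := Complex.conj_ofReal _

private lemma upow (n : ℕ) (t : ℝ) :
    Complex.exp ((n:ℂ) * Complex.I * t) = Complex.exp (Complex.I * t) ^ n := by
  rw [show ((n:ℂ)*Complex.I*(t:ℂ)) = (n:ℂ)*(Complex.I*t) by ring, Complex.exp_nat_mul]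

private lemma uneg (n : ℕ) (t : ℝ) :
    Complex.exp (-(n:ℂ) * Complex.I * t) = (Complex.exp (Complex.I * t) ^ n)⁻¹ := by
  rw [show (-(n:ℂ)*Complex.I*(t:ℂ)) = -((n:ℂ)*Complex.I*t) by ring, Complex.exp_neg, upow]

end CEqOneAux

theorem c_eq_one_example
    (α : ℝ → ℂ)
    (hα : ∀ t : ℝ, α t = 2 * Complex.exp (2 * Complex.I * t) *
        (Complex.exp (-Complex.I * π / 4) + (Real.sqrt 6 : ℂ) * Complex.cos (4 * t)))
    (ℓ : ℝ → ℂ) (hℓ : ∀ t : ℝ, ℓ t = ∫ s in (0:ℝ)..t, α s) :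
    (∫ t in (0:ℝ)..π, α t) = 0 ∧
    Function.Periodic ℓ π ∧
    (∫ t in (0:ℝ)..π, ((starRingEnd ℂ) (ℓ t) * deriv ℓ t).im) = 0 := by
  -- exponent abbreviations below: u := exp (I t)
  have h2 : ∀ t : ℝ, Complex.exp (2*Complex.I*t) = Complex.exp (Complex.I*t)^2 := by
    intro t; have := upow 2 t; norm_num at this; exact this
  have h4 : ∀ t : ℝ, Complex.exp (4*Complex.I*t) = Complex.exp (Complex.I*t)^4 := by
    intro t; have := upow 4 t; norm_num at this; exact this
  have h6 : ∀ t : ℝ, Complex.exp (6*Complex.I*t) = Complex.exp (Complex.I*t)^6 := by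
    intro t; have := upow 6 t; norm_num at this; exact this
  have h8 : ∀ t : ℝ, Complex.exp (8*Complex.I*t) = Complex.exp (Complex.I*t)^8 := by
    intro t; have := upow 8 t; norm_num at this; exact this
  have hm2 : ∀ t : ℝ, Complex.exp ((-2)*Complex.I*t) = Complex.exp (-(Complex.I*t))^2 := by
    intro t
    rw [show ((-2:ℂ))*Complex.I*(t:ℂ) = ((2:ℕ):ℂ)*(-(Complex.I*t)) by push_cast; ring,
      Complex.exp_nat_mul]
  have hm4 : ∀ t : ℝ, Complex.exp ((-4)*Complex.I*t) = Complex.exp (-(Complex.I*t))^4 := by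
    intro t
    rw [show ((-4:ℂ))*Complex.I*(t:ℂ) = ((4:ℕ):ℂ)*(-(Complex.I*t)) by push_cast; ring,
      Complex.exp_nat_mul]
  have hm6 : ∀ t : ℝ, Complex.exp ((-6)*Complex.I*t) = Complex.exp (-(Complex.I*t))^6 := by
    intro t
    rw [show ((-6:ℂ))*Complex.I*(t:ℂ) = ((6:ℕ):ℂ)*(-(Complex.I*t)) by push_cast; ring,
      Complex.exp_nat_mul]
  have hm8 : ∀ t : ℝ, Complex.exp ((-8)*Complex.I*t) = Complex.exp (-(Complex.I*t))^8 := by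
    intro t
    rw [show ((-8:ℂ))*Complex.I*(t:ℂ) = ((8:ℕ):ℂ)*(-(Complex.I*t)) by push_cast; ring,
      Complex.exp_nat_mul]
  have hcos : ∀ t : ℝ, Complex.cos (4*(t:ℂ)) =
      (Complex.exp (Complex.I*t)^4 + Complex.exp (-(Complex.I*t))^4)/2 := by
    intro t
    rw [Complex.cos]
    rw [show (4*(t:ℂ)*Complex.I) = 4*Complex.I*t by ring, h4]
    rw [show (-(4*(t:ℂ))*Complex.I) = (-4)*Complex.I*t by ring, hm4]
  have hw : ∀ t : ℝ, Complex.exp (Complex.I*t) * Complex.exp (-(Complex.I*t)) = 1 := by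
    intro t; rw [← Complex.exp_add]; simp
  have hu : ∀ t : ℝ, Complex.exp (Complex.I*(t:ℂ)) ≠ 0 := fun t => Complex.exp_ne_zero _
  -- α with cst/sq6 names
  have hα2 : ∀ t : ℝ, α t = 2 * Complex.exp (2 * Complex.I * t) *
      (cst + sq6 * Complex.cos (4 * t)) := by
    intro t; rw [hα t]; rfl
  -- derivative of Fc is α
  have hFd : ∀ t : ℝ, HasDerivAt Fc (α t) t := by
    intro t
    have b1 : HasDerivAt (fun s : ℝ => (-Complex.I*cst) * Complex.exp (2*Complex.I*s))
        (2*cst*Complex.exp (2*Complex.I*t)) t := by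
      have a1 := (hasDerivAt_expat (2*Complex.I) t).const_mul (-Complex.I*cst)
      have : -Complex.I*cst * (2*Complex.I * Complex.exp (2*Complex.I*(t:ℂ))) =
          2*cst*Complex.exp (2*Complex.I*t) := by
        linear_combination (-(2*cst*Complex.exp (2*Complex.I*(t:ℂ)))) * Complex.I_sq
      rwa [this] at a1
    have b2 : HasDerivAt (fun s : ℝ => (-Complex.I*sq6/6) * Complex.exp (6*Complex.I*s))
        (sq6*Complex.exp (6*Complex.I*t)) t := by
      have a2 := (hasDerivAt_expat (6*Complex.I) t).const_mul (-Complex.I*sq6/6)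
      have : -Complex.I*sq6/6 * (6*Complex.I * Complex.exp (6*Complex.I*(t:ℂ))) =
          sq6*Complex.exp (6*Complex.I*t) := by
        linear_combination (-(sq6*Complex.exp (6*Complex.I*(t:ℂ)))) * Complex.I_sq
      rwa [this] at a2
    have b3 : HasDerivAt (fun s : ℝ => (Complex.I*sq6/2) * Complex.exp ((-2)*Complex.I*s))
        (sq6*Complex.exp ((-2)*Complex.I*t)) t := by
      have a3 := (hasDerivAt_expat ((-2)*Complex.I) t).const_mul (Complex.I*sq6/2)
      have : Complex.I*sq6/2 * ((-2)*Complex.I * Complex.exp ((-2)*Complex.I*(t:ℂ))) =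
          sq6*Complex.exp ((-2)*Complex.I*t) := by
        linear_combination (-(sq6*Complex.exp ((-2)*Complex.I*(t:ℂ)))) * Complex.I_sq
      rwa [this] at a3
    have hsum := (b1.add b2).add b3
    have hid : 2*cst*Complex.exp (2*Complex.I*(t:ℂ)) + sq6*Complex.exp (6*Complex.I*(t:ℂ))
        + sq6*Complex.exp ((-2)*Complex.I*(t:ℂ)) = α t := by
      rw [hα2 t, hcos t, h2, h6, hm2]
      linear_combination (-(sq6 * Complex.exp (-(Complex.I*(t:ℂ)))^2 *
        (Complex.exp (Complex.I*(t:ℂ)) * Complex.exp (-(Complex.I*(t:ℂ))) + 1))) * hw t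
    rw [hid] at hsum
    exact hsum
  have hαc : Continuous α := by
    have : α = fun t : ℝ => 2 * Complex.exp (2 * Complex.I * t) *
        (cst + sq6 * Complex.cos (4 * t)) := funext hα2
    rw [this]; fun_prop
  have hℓF : ∀ t : ℝ, ℓ t = Fc t - Fc 0 := by
    intro t
    rw [hℓ t]
    exact integral_eq_sub_of_hasDerivAt (fun x _ => hFd x) (hαc.intervalIntegrable 0 t)
  -- exp periodicity facts
  have hper : ∀ (k : ℤ) (a : ℂ), Complex.exp (a + k*(2*(π:ℂ)*Complex.I)) = Complex.exp a := by
    intro k a; rw [Complex.exp_add, Complex.exp_int_mul_two_pi_mul_I, mul_one]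
  have hFπ : ∀ t : ℝ, Fc (t + π) = Fc t := by
    intro t
    unfold Fc
    rw [show (2*Complex.I*((t:ℝ)+π:ℝ) : ℂ) = 2*Complex.I*t + (1:ℤ)*(2*(π:ℂ)*Complex.I) by push_cast; ring]
    rw [show (6*Complex.I*((t:ℝ)+π:ℝ) : ℂ) = 6*Complex.I*t + (3:ℤ)*(2*(π:ℂ)*Complex.I) by push_cast; ring]
    rw [show ((-2)*Complex.I*((t:ℝ)+π:ℝ) : ℂ) = (-2)*Complex.I*t + (-1:ℤ)*(2*(π:ℂ)*Complex.I) by push_cast; ring]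
    rw [hper, hper, hper]
  have hFcπ : Fc π = Fc 0 := by
    have := hFπ 0
    simpa using this
  have part1 : (∫ t in (0:ℝ)..π, α t) = 0 := by
    rw [integral_eq_sub_of_hasDerivAt (fun x _ => hFd x) (hαc.intervalIntegrable 0 π), hFcπ,
      sub_self]
  refine ⟨part1, ?_, ?_⟩
  · intro t
    rw [hℓF, hℓF, hFπ]
  · -- third part
    have hderiv : ∀ t : ℝ, deriv ℓ t = α t := by
      intro t
      have : HasDerivAt ℓ (α t) t := by
        have h : HasDerivAt (fun t => Fc t - Fc 0) (α t) t := (hFd t).sub_const (Fc 0)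
        have he : ℓ = fun t => Fc t - Fc 0 := funext hℓF
        rw [he]; exact h
      exact this.deriv
    -- conj Fc
    have hconjF : ∀ t : ℝ, (starRingEnd ℂ) (Fc t) =
        (Complex.I*dd) * Complex.exp ((-2)*Complex.I*t)
        + (Complex.I*sq6/6) * Complex.exp ((-6)*Complex.I*t)
        + (-(Complex.I*sq6/2)) * Complex.exp (2*Complex.I*t) := by
      intro t
      have hc1 : (starRingEnd ℂ) (-Complex.I*cst) = Complex.I*dd := by
        rw [map_mul, map_neg, Complex.conj_I, hdc]; try ring
      have hc2 : (starRingEnd ℂ) (-Complex.I*sq6/6) = Complex.I*sq6/6 := by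
        rw [map_div₀, map_mul, map_neg, Complex.conj_I, conj_sq6, Complex.conj_ofNat]; try ring
      have hc3 : (starRingEnd ℂ) (Complex.I*sq6/2) = -(Complex.I*sq6/2) := by
        rw [map_div₀, map_mul, Complex.conj_I, conj_sq6, Complex.conj_ofNat]; try ring
      have he1 : (starRingEnd ℂ) (Complex.exp (2*Complex.I*(t:ℂ))) =
          Complex.exp ((-2)*Complex.I*t) := by
        rw [cexp_conj, show (starRingEnd ℂ) (2*Complex.I) = (-2)*Complex.I from by
          simp [Complex.conj_ofNat]]
      have he2 : (starRingEnd ℂ) (Complex.exp (6*Complex.I*(t:ℂ))) =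
          Complex.exp ((-6)*Complex.I*t) := by
        rw [cexp_conj, show (starRingEnd ℂ) (6*Complex.I) = (-6)*Complex.I from by
          simp [Complex.conj_ofNat]]
      have he3 : (starRingEnd ℂ) (Complex.exp ((-2)*Complex.I*(t:ℂ))) =
          Complex.exp (2*Complex.I*t) := by
        rw [cexp_conj, show (starRingEnd ℂ) ((-2)*Complex.I) = 2*Complex.I from by
          simp [Complex.conj_ofNat]]
      have p1 : (starRingEnd ℂ) ((-Complex.I*cst) * Complex.exp (2*Complex.I*(t:ℂ))) =
          Complex.I*dd * Complex.exp ((-2)*Complex.I*t) := by rw [map_mul, hc1, he1]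
      have p2 : (starRingEnd ℂ) ((-Complex.I*sq6/6) * Complex.exp (6*Complex.I*(t:ℂ))) =
          Complex.I*sq6/6 * Complex.exp ((-6)*Complex.I*t) := by rw [map_mul, hc2, he2]
      have p3 : (starRingEnd ℂ) ((Complex.I*sq6/2) * Complex.exp ((-2)*Complex.I*(t:ℂ))) =
          -(Complex.I*sq6/2) * Complex.exp (2*Complex.I*t) := by rw [map_mul, hc3, he3]
      show (starRingEnd ℂ) ((-Complex.I*cst) * Complex.exp (2*Complex.I*(t:ℂ))
          + (-Complex.I*sq6/6) * Complex.exp (6*Complex.I*(t:ℂ))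
          + (Complex.I*sq6/2) * Complex.exp ((-2)*Complex.I*(t:ℂ))) = _
      rw [map_add, map_add, p1, p2, p3]
      try ring
    -- derivative of Gc
    have hGd : ∀ t : ℝ, HasDerivAt Gc ((starRingEnd ℂ) (Fc t) * α t) t := by
      intro t
      have g1 := (hasDerivAt_expat (4*Complex.I) t).const_mul (sq6*(dd-cst)/4)
      have g2 := (hasDerivAt_expat ((-4)*Complex.I) t).const_mul (sq6*(dd+cst/3)/4)
      have g3 := (hasDerivAt_expat (8*Complex.I) t).const_mul (sq6^2/16)
      have g4 := (hasDerivAt_expat ((-8)*Complex.I) t).const_mul (sq6^2/48)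
      have g5 : HasDerivAt (fun s : ℝ => KK * (s:ℂ)) KK t := by
        simpa using (Complex.ofRealCLM.hasDerivAt (x := t)).const_mul KK
      have hsum := (((g1.sub g2).sub g3).sub g4).add g5
      have hid : (sq6*(dd-cst)/4) * (4*Complex.I * Complex.exp (4*Complex.I*t))
          - (sq6*(dd+cst/3)/4) * ((-4)*Complex.I * Complex.exp ((-4)*Complex.I*t))
          - (sq6^2/16) * (8*Complex.I * Complex.exp (8*Complex.I*t))
          - (sq6^2/48) * ((-8)*Complex.I * Complex.exp ((-8)*Complex.I*t))
          + KK = (starRingEnd ℂ) (Fc t) * α t := by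
        rw [hconjF t, hα2 t, hcos t]
        rw [h2, h4, h8, hm2, hm4, hm6, hm8]
        unfold KK
        set U := Complex.exp (Complex.I*(t:ℂ)) with hU
        set W := Complex.exp (-(Complex.I*(t:ℂ))) with hW
        linear_combination ((1/3)*sq6^2*Complex.I + (-2)*cst*dd*Complex.I + (-1)*W^4*dd*sq6*Complex.I + (-1/3)*W^4*cst*sq6*Complex.I + (-1/6)*W^8*sq6^2*Complex.I + (1/3)*U*W*sq6^2*Complex.I + (-2)*U*W*cst*dd*Complex.I + (-1)*U*W^5*dd*sq6*Complex.I + (-1/3)*U*W^5*cst*sq6*Complex.I + (-1/6)*U*W^9*sq6^2*Complex.I + (1/3)*U^2*W^2*sq6^2*Complex.I + (1/3)*U^3*W^3*sq6^2*Complex.I + (-1)*U^4*dd*sq6*Complex.I + (-1/6)*U^4*W^4*sq6^2*Complex.I + (-1)*U^5*W*dd*sq6*Complex.I + (-1/6)*U^5*W^5*sq6^2*Complex.I) * hw t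
      rw [hid] at hsum
      exact hsum
    -- continuity of conj Fc * α
    have hFcont : Continuous Fc := by unfold Fc; fun_prop
    have hgcont : Continuous (fun t : ℝ => (starRingEnd ℂ) (Fc t) * α t) :=
      (Complex.continuous_conj.comp hFcont).mul hαc
    have hGπ : Gc π = Gc 0 := by
      unfold Gc
      rw [show (4*Complex.I*(π:ℝ) : ℂ) = 0 + (2:ℤ)*(2*(π:ℂ)*Complex.I) by push_cast; ring]
      rw [show ((-4)*Complex.I*(π:ℝ) : ℂ) = 0 + (-2:ℤ)*(2*(π:ℂ)*Complex.I) by push_cast; ring]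
      rw [show (8*Complex.I*(π:ℝ) : ℂ) = 0 + (4:ℤ)*(2*(π:ℂ)*Complex.I) by push_cast; ring]
      rw [show ((-8)*Complex.I*(π:ℝ) : ℂ) = 0 + (-4:ℤ)*(2*(π:ℂ)*Complex.I) by push_cast; ring]
      rw [hper, hper, hper, hper, hKK]
      norm_num
    have hint0 : (∫ t in (0:ℝ)..π, (starRingEnd ℂ) (Fc t) * α t) = 0 := by
      rw [integral_eq_sub_of_hasDerivAt (fun x _ => hGd x) (hgcont.intervalIntegrable 0 π), hGπ,
        sub_self]
    -- the full integrand
    have hintegrand : ∀ t : ℝ, (starRingEnd ℂ) (ℓ t) * deriv ℓ t =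
        (starRingEnd ℂ) (Fc t) * α t - (starRingEnd ℂ) (Fc 0) * α t := by
      intro t
      rw [hderiv t, hℓF t, map_sub]
      ring
    have hintC : (∫ t in (0:ℝ)..π, (starRingEnd ℂ) (ℓ t) * deriv ℓ t) = 0 := by
      rw [intervalIntegral.integral_congr (g := fun t =>
        (starRingEnd ℂ) (Fc t) * α t - (starRingEnd ℂ) (Fc 0) * α t)
        (fun t _ => hintegrand t)]
      rw [intervalIntegral.integral_sub (g := fun t => (starRingEnd ℂ) (Fc 0) * α t) (hgcont.intervalIntegrable 0 π)
        ((continuous_const.mul hαc).intervalIntegrable 0 π)]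
      rw [hint0, intervalIntegral.integral_const_mul, part1]
      ring
    have hintegrable : IntervalIntegrable (fun t : ℝ => (starRingEnd ℂ) (ℓ t) * deriv ℓ t)
        MeasureTheory.volume 0 π := by
      have : (fun t : ℝ => (starRingEnd ℂ) (ℓ t) * deriv ℓ t) = (fun t =>
        (starRingEnd ℂ) (Fc t) * α t - (starRingEnd ℂ) (Fc 0) * α t) := funext hintegrand
      rw [this]
      exact (hgcont.sub (continuous_const.mul hαc)).intervalIntegrable 0 π
    calc (∫ t in (0:ℝ)..π, ((starRingEnd ℂ) (ℓ t) * deriv ℓ t).im)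
        = (∫ t in (0:ℝ)..π, Complex.imCLM ((starRingEnd ℂ) (ℓ t) * deriv ℓ t)) := rfl
      _ = Complex.imCLM (∫ t in (0:ℝ)..π, (starRingEnd ℂ) (ℓ t) * deriv ℓ t) :=
          Complex.imCLM.intervalIntegral_comp_comm hintegrable
      _ = 0 := by rw [hintC]; simp
end

section
/- Let a₀(z) = e^{−iz}·cosh(sin z), b₀(z) = sinh(sin z). Then the Maurer–Cartan form C₀⁻¹ C₀' of C₀(z) = !![a₀(z), b₀(z); b₀(z), e^{iz} cosh(sin z)] has (1,1)-entry ν(z) = −i·cosh²(sin z) and (1,2)-entry κ(z) = e^{iz}·( cos z − (i/2)·sinh(2 sin z) ). -/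
open Matrix Complex

lemma hd_ch (z : ℂ) : HasDerivAt (fun w => Complex.cosh (Complex.sin w))
    (Complex.sinh (Complex.sin z) * Complex.cos z) z :=
  (Complex.hasDerivAt_cosh (Complex.sin z)).comp z (Complex.hasDerivAt_sin z)

lemma hd_sh (z : ℂ) : HasDerivAt (fun w => Complex.sinh (Complex.sin w))
    (Complex.cosh (Complex.sin z) * Complex.cos z) z :=
  (Complex.hasDerivAt_sinh (Complex.sin z)).comp z (Complex.hasDerivAt_sin z)

lemma hd_e (c : ℂ) (z : ℂ) : HasDerivAt (fun w => Complex.exp (c * w))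
    (Complex.exp (c * z) * c) z := by
  exact (Complex.hasDerivAt_exp (c * z)).comp z (((hasDerivAt_id z).const_mul c).congr_deriv (mul_one c))

lemma hd_prod (c : ℂ) (z : ℂ) :
    deriv (fun w => Complex.exp (c * w) * Complex.cosh (Complex.sin w)) z =
    Complex.exp (c * z) * c * Complex.cosh (Complex.sin z) +
      Complex.exp (c * z) * (Complex.sinh (Complex.sin z) * Complex.cos z) :=
  ((hd_e c z).mul (hd_ch z)).deriv

theorem full_frame_maurer_cartan_example
    (C₀ C₀' : ℂ → Matrix (Fin 2) (Fin 2) ℂ)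
    (hC₀ : ∀ z, C₀ z = !![Complex.exp (-Complex.I * z) * Complex.cosh (Complex.sin z),
        Complex.sinh (Complex.sin z);
        Complex.sinh (Complex.sin z),
        Complex.exp (Complex.I * z) * Complex.cosh (Complex.sin z)])
    (hC₀' : ∀ z, C₀' z =
        !![deriv (fun w => Complex.exp (-Complex.I * w) * Complex.cosh (Complex.sin w)) z,
           deriv (fun w => Complex.sinh (Complex.sin w)) z;
           deriv (fun w => Complex.sinh (Complex.sin w)) z,
           deriv (fun w => Complex.exp (Complex.I * w) * Complex.cosh (Complex.sin w)) z]) :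
    ∀ z : ℂ,
      ((C₀ z)⁻¹ * C₀' z) 0 0 = -Complex.I * Complex.cosh (Complex.sin z) ^ 2 ∧
      ((C₀ z)⁻¹ * C₀' z) 0 1 = Complex.exp (Complex.I * z) *
        (Complex.cos z - (Complex.I / 2) * Complex.sinh (2 * Complex.sin z)) := by
  intro z
  set c := Complex.cosh (Complex.sin z) with hc
  set s := Complex.sinh (Complex.sin z) with hs
  have hdet : (C₀ z).det = 1 := by
    rw [hC₀ z, Matrix.det_fin_two_of]
    rw [mul_mul_mul_comm, ← Complex.exp_add]
    have : -Complex.I * z + Complex.I * z = 0 := by ring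
    rw [this, Complex.exp_zero, one_mul, ← sq, ← sq, Complex.cosh_sq_sub_sinh_sq]
  have hinv : (C₀ z)⁻¹ = !![Complex.exp (Complex.I * z) * c, -s; -s,
      Complex.exp (-Complex.I * z) * c] := by
    rw [Matrix.inv_def, hdet, hC₀ z, Matrix.adjugate_fin_two_of]
    simp [hc, hs]
  have h1 : deriv (fun w => Complex.exp (-(Complex.I * w)) * Complex.cosh (Complex.sin w)) z =
      Complex.exp (-Complex.I * z) * -Complex.I * Complex.cosh (Complex.sin z) +
        Complex.exp (-Complex.I * z) * (Complex.sinh (Complex.sin z) * Complex.cos z) := by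
    simpa only [← neg_mul] using hd_prod (-Complex.I) z
  have h2 := hd_prod (Complex.I) z
  have h3 := (hd_sh z).deriv
  have hcs : c ^ 2 - s ^ 2 = 1 := Complex.cosh_sq_sub_sinh_sq _
  have hsinh2 : Complex.sinh (2 * Complex.sin z) = 2 * s * c := by
    rw [two_mul, Complex.sinh_add, hc, hs]; ring
  have hee : Complex.exp (Complex.I * z) * Complex.exp (-(Complex.I * z)) = 1 := by
    rw [← Complex.exp_add]
    have : Complex.I * z + -(Complex.I * z) = 0 := by ring
    rw [this, Complex.exp_zero]
  constructor
  · rw [hinv, hC₀' z]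
    simp [Matrix.mul_apply, Fin.sum_univ_two, h1, h3, neg_mul, ← hc, ← hs]
    linear_combination (-Complex.I * c ^ 2 + c * s * Complex.cos z) * hee
  · rw [hinv, hC₀' z]
    simp [Matrix.mul_apply, Fin.sum_univ_two, h2, h3, neg_mul, ← hc, ← hs, hsinh2]
    linear_combination (Complex.exp (Complex.I * z) * Complex.cos z) * hcs
end
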